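/- Given a well-formed pair (S,U) with S = {S_1,...,S_r} for a hypergraph H and edge weight function γ, if there is an assignment ν : E → [0,1] of weight at most k whose support has size at most ∑_i |S_i| + 2^{|U|} and which covers (⋃_i ⋂S_i) ∪ U, and whose values arise from an optimal solution of the associated linear program LP(S,U) with optimum at most k, then (S,U) is a perfect pair. More precisely: if the optimal value of LP(S,U) is at most k, then (S,U) is perfect. -/

import Mathlib

open scoped Classical

lemma clip_sum {α : Type*} (s : Finset α) (x : α → ℝ) (hx : ∀ e, 0 ≤ x e)
    (h : 1 ≤ ∑ e ∈ s, x e) : 1 ≤ ∑ e ∈ s, min (x e) 1 := by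
  by_cases hb : ∀ e ∈ s, x e ≤ 1
  · calc 1 ≤ ∑ e ∈ s, x e := h
    _ = ∑ e ∈ s, min (x e) 1 := by
        apply Finset.sum_congr rfl; intro e he; rw [min_eq_left (hb e he)]
  · push_neg at hb
    obtain ⟨e₀, he₀, h1⟩ := hb
    calc (1:ℝ) = min (x e₀) 1 := by rw [min_eq_right h1.le]
    _ ≤ ∑ e ∈ s, min (x e) 1 := by
        apply Finset.single_le_sum (fun e _ => le_min (hx e) zero_le_one) he₀

/-- Let `(S,U)` be a well-formed pair for a hypergraph `H = (V,E)` and edge weight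
function `γ`, with a set `A` of witnessing representatives (one representative edge per
nonempty working subset of `U`). If the optimal value of the linear program `LP(S,U)` is at
most `k`, then `(S,U)` is a perfect pair: there is `ν : E → [0,1]` of weight at most `k`, with
support of size at most `n(S,U) = ∑_i |S_i| + 2^{|U|}`, covering `(⋃_i ⋂ S_i) ∪ U`. -/
theorem stmt_9 {V : Type} [Fintype V] [DecidableEq V]
    (c : ℕ) (k : ℝ)
    (E : Finset (Finset V)) (hE : ∀ e ∈ E, e.Nonempty)
    (γ : Finset V → ℝ)
    (hγ : ∀ e ∈ E, 0 ≤ γ e ∧ γ e ≤ 1) (hγE : ∀ e ∉ E, γ e = 0)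
    (S : Finset (Finset (Finset V))) (U : Finset V)
    (B : Finset V)
    (hB : B = Finset.univ.filter fun v : V => 1 ≤ ∑ e ∈ E.filter (v ∈ ·), γ e)
    -- well-formed pair
    (hU : U ⊆ B)
    (hS : ∀ Si ∈ S, Si ⊆ E ∧ Si.card ≤ c)
    (hcover : ∀ v ∈ B, v ∉ U → ∃ Si ∈ S, ∀ e ∈ Si, v ∈ e)
    -- witnessing representatives
    (A : Finset (Finset V))
    (hA1 : A ⊆ E)
    (hA2 : ∀ a ∈ A, a ∉ S.sup id ∧ (a ∩ U).Nonempty)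
    (hA3 : ∀ e ∈ E, e ∉ S.sup id → (e ∩ U).Nonempty → ∃ a ∈ A, a ∩ U = e ∩ U)
    (hA4 : ∀ a ∈ A, ∀ a' ∈ A, a ∩ U = a' ∩ U → a = a')
    -- the optimal value of LP(S,U) is at most k
    (opt : ℝ)
    (hopt : IsLeast {w : ℝ |
      ∃ x : Finset V → ℝ,
        (∀ e, 0 ≤ x e) ∧ (∀ e ∉ S.sup id ∪ A, x e = 0) ∧
        (∀ Si ∈ S, 1 ≤ ∑ e ∈ Si, x e) ∧
        (∀ u ∈ U, 1 ≤ ∑ e ∈ (S.sup id ∪ A).filter (u ∈ ·), x e) ∧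
        w = ∑ e ∈ S.sup id ∪ A, x e} opt)
    (hoptk : opt ≤ k) :
    -- (S,U) is a perfect pair
    ∃ ν : Finset V → ℝ,
      (∀ e, 0 ≤ ν e ∧ ν e ≤ 1) ∧ (∀ e ∉ E, ν e = 0) ∧
      (∑ e ∈ E, ν e) ≤ k ∧
      (E.filter fun e => ν e ≠ 0).card ≤ (∑ Si ∈ S, Si.card) + 2 ^ U.card ∧
      (∀ u ∈ U, 1 ≤ ∑ e ∈ E.filter (u ∈ ·), ν e) ∧
      (∀ Si ∈ S, ∀ v : V, (∀ e ∈ Si, v ∈ e) → 1 ≤ ∑ e ∈ E.filter (v ∈ ·), ν e) := by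
  obtain ⟨⟨x, hx0, hxz, hxS, hxU, hxsum⟩, -⟩ := hopt
  have hsupE : S.sup id ⊆ E := by
    intro e he
    rw [Finset.mem_sup] at he
    obtain ⟨Si, hSi, he⟩ := he
    exact (hS Si hSi).1 he
  have hsub : S.sup id ∪ A ⊆ E := Finset.union_subset hsupE hA1
  refine ⟨fun e => min (x e) 1, fun e => ⟨le_min (hx0 e) zero_le_one, min_le_right _ _⟩,
    ?_, ?_, ?_, ?_, ?_⟩
  · intro e he
    have : x e = 0 := hxz e (fun h => he (hsub h))
    simp [this]
  · have h1 : ∑ e ∈ E, min (x e) 1 = ∑ e ∈ S.sup id ∪ A, min (x e) 1 := by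
      refine (Finset.sum_subset hsub ?_).symm
      intro e _ he
      rw [hxz e he]; simp
    rw [h1]
    calc ∑ e ∈ S.sup id ∪ A, min (x e) 1 ≤ ∑ e ∈ S.sup id ∪ A, x e :=
      Finset.sum_le_sum (fun e _ => min_le_left _ _)
    _ = opt := hxsum.symm
    _ ≤ k := hoptk
  · have hfil : (E.filter fun e => min (x e) 1 ≠ 0) ⊆ S.sup id ∪ A := by
      intro e he
      rw [Finset.mem_filter] at he
      by_contra h
      exact he.2 (by rw [hxz e h]; simp)
    calc (E.filter fun e => min (x e) 1 ≠ 0).card ≤ (S.sup id ∪ A).card :=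
      Finset.card_le_card hfil
    _ ≤ (S.sup id).card + A.card := Finset.card_union_le _ _
    _ ≤ (∑ Si ∈ S, Si.card) + 2 ^ U.card := by
        gcongr
        · rw [Finset.sup_eq_biUnion]
          exact Finset.card_biUnion_le
        · have : A.card ≤ U.powerset.card := by
            apply Finset.card_le_card_of_injOn (fun a => a ∩ U)
            · intro a ha
              simp only [Finset.mem_coe, Finset.mem_powerset]
              exact Finset.inter_subset_right
            · intro a ha a' ha' h
              exact hA4 a ha a' ha' h
          simpa [Finset.card_powerset] using this
  · intro u hu
    have h1 := clip_sum _ x hx0 (hxU u hu)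
    refine le_trans h1 (Finset.sum_le_sum_of_subset_of_nonneg ?_ ?_)
    · intro e he
      rw [Finset.mem_filter] at he ⊢
      exact ⟨hsub he.1, he.2⟩
    · intro e _ _; exact le_min (hx0 e) zero_le_one
  · intro Si hSi v hv
    have h1 := clip_sum _ x hx0 (hxS Si hSi)
    refine le_trans h1 (Finset.sum_le_sum_of_subset_of_nonneg ?_ ?_)
    · intro e he
      rw [Finset.mem_filter]
      exact ⟨(hS Si hSi).1 he, hv e he⟩
    · intro e _ _; exact le_min (hx0 e) zero_le_one
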